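/- arXiv:1706.03390 — 2 statements merged into one kernel-verified Lean document; each statement's English description precedes it below -/
import Mathlib

section
/- For every nonempty set A ⊆ V of vertices of Q^n, the number of edges of Q^n with both endpoints in A is at most |A|·log₂|A| / 2; equivalently, the number of edges of Q^n joining A to V∖A is at least n·|A| − |A|·log₂|A|. -/
open scoped Classical

noncomputable section

/-- The vertex set of the `n`-dimensional hypercube: `{0,1}^n`. -/
abbrev Vtx (n : ℕ) := Fin n → Bool

/-- The `n`-dimensional hypercube graph `Q^n`: two vertices are adjacent iff they
differ in exactly one coordinate. -/
def cubeGraph (n : ℕ) : SimpleGraph (Vtx n) :=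
  SimpleGraph.fromRel (fun u v => hammingDist u v = 1)

/-- The number of edges of `G` with both endpoints in `A`. -/
def edgesWithin {V : Type*} (G : SimpleGraph V) (A : Finset V) : ℕ :=
  Nat.card {e : Sym2 V // e ∈ G.edgeSet ∧ ∀ x ∈ e, x ∈ A}

/-- The number of edges of `G` with one endpoint in `A` and the other outside `A`. -/
def edgesAcross {V : Type*} (G : SimpleGraph V) (A : Finset V) : ℕ :=
  Nat.card {e : Sym2 V // e ∈ G.edgeSet ∧ (∃ x ∈ e, x ∈ A) ∧ ∃ x ∈ e, x ∉ A}

open Finset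

lemma bool_ne_iff {a b : Bool} : a ≠ b ↔ a = !b := by
  cases a <;> cases b <;> simp

lemma neighbors_card {n : ℕ} (u : Fin n → Bool) :
    ((Finset.univ : Finset (Fin n → Bool)).filter
      fun v => hammingDist u v = 1).card = n := by
  classical
  have key : (Finset.univ : Finset (Fin n)).card =
      ((Finset.univ : Finset (Fin n → Bool)).filter
        fun v => hammingDist u v = 1).card := by
    apply Finset.card_bij (fun i _ => Function.update u i (!(u i)))
    · intro i _
      simp only [Finset.mem_filter, Finset.mem_univ, true_and]
      have h : (Finset.univ.filter fun j => u j ≠ Function.update u i (!(u i)) j) = {i} := by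
        ext j
        simp only [Finset.mem_filter, Finset.mem_univ, true_and, Finset.mem_singleton]
        by_cases hj : j = i
        · subst hj; simp [Function.update_self]
        · simp [Function.update_of_ne hj, hj]
      simp only [hammingDist]
      rw [h, Finset.card_singleton]
    · intro i _ j _ hij
      by_contra hne
      have h2 := congrArg (fun f => f i) hij
      simp only [Function.update_self] at h2
      rw [Function.update_of_ne hne] at h2
      cases u i <;> simp_all
    · intro v hv
      simp only [Finset.mem_filter, Finset.mem_univ, true_and, hammingDist] at hv
      obtain ⟨i, hi⟩ := Finset.card_eq_one.mp hv
      refine ⟨i, Finset.mem_univ i, ?_⟩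
      funext j
      by_cases hj : j = i
      · subst hj
        have hne : u j ≠ v j := by
          have hm : j ∈ ({j} : Finset (Fin n)) := Finset.mem_singleton_self j
          rw [← hi] at hm
          simpa using hm
        rw [Function.update_self]
        cases hu : u j <;> cases hv2 : v j <;> simp_all
      · have hm : j ∉ ({i} : Finset (Fin n)) := by simp [hj]
        rw [← hi] at hm
        simp only [Finset.mem_filter, Finset.mem_univ, true_and, not_not] at hm
        rw [Function.update_of_ne hj, hm]
  simpa using key.symm

lemma cube_adj {n : ℕ} {u v : Vtx n} :
    (cubeGraph n).Adj u v ↔ hammingDist u v = 1 := by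
  constructor
  · rintro ⟨hne, h | h⟩
    · exact h
    · rwa [hammingDist_comm]
  · intro h
    refine ⟨fun he => by simp [he, hammingDist_self] at h, Or.inl h⟩

/-- induced-edges graph -/
def Gin (n : ℕ) (A : Finset (Vtx n)) : SimpleGraph (Vtx n) where
  Adj u v := hammingDist u v = 1 ∧ u ∈ A ∧ v ∈ A
  symm := by
    constructor
    rintro u v ⟨h, hu, hv⟩
    exact ⟨by rwa [hammingDist_comm], hv, hu⟩
  loopless := by
    constructor
    rintro u ⟨h, -⟩
    simp [hammingDist_self] at h

/-- cross-edges graph -/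
def Gx (n : ℕ) (A : Finset (Vtx n)) : SimpleGraph (Vtx n) where
  Adj u v := hammingDist u v = 1 ∧ ((u ∈ A ∧ v ∉ A) ∨ (v ∈ A ∧ u ∉ A))
  symm := by
    constructor
    rintro u v ⟨h, h2⟩
    exact ⟨by rwa [hammingDist_comm], h2.symm⟩
  loopless := by
    constructor
    rintro u ⟨h, -⟩
    simp [hammingDist_self] at u h

lemma Gin_adj {n : ℕ} {A : Finset (Vtx n)} {u v : Vtx n} :
    (Gin n A).Adj u v ↔ hammingDist u v = 1 ∧ u ∈ A ∧ v ∈ A := Iff.rfl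

lemma Gx_adj {n : ℕ} {A : Finset (Vtx n)} {u v : Vtx n} :
    (Gx n A).Adj u v ↔ hammingDist u v = 1 ∧ ((u ∈ A ∧ v ∉ A) ∨ (v ∈ A ∧ u ∉ A)) := Iff.rfl

lemma edgesWithin_eq (n : ℕ) (A : Finset (Vtx n)) :
    edgesWithin (cubeGraph n) A = (Gin n A).edgeFinset.card := by
  classical
  rw [edgesWithin, Nat.card_eq_fintype_card, Fintype.card_subtype]
  congr 1
  ext e
  induction e with
  | _ u v =>
    simp only [Finset.mem_filter, Finset.mem_univ, true_and, SimpleGraph.mem_edgeFinset,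
      SimpleGraph.mem_edgeSet, cube_adj, Sym2.mem_iff, Gin_adj]
    constructor
    · rintro ⟨h, hall⟩
      exact ⟨h, hall u (Or.inl rfl), hall v (Or.inr rfl)⟩
    · rintro ⟨h, hu, hv⟩
      exact ⟨h, by rintro x (rfl | rfl) <;> assumption⟩

lemma edgesAcross_eq (n : ℕ) (A : Finset (Vtx n)) :
    edgesAcross (cubeGraph n) A = (Gx n A).edgeFinset.card := by
  classical
  rw [edgesAcross, Nat.card_eq_fintype_card, Fintype.card_subtype]
  congr 1
  ext e
  induction e with
  | _ u v =>
    simp only [Finset.mem_filter, Finset.mem_univ, true_and, SimpleGraph.mem_edgeFinset,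
      SimpleGraph.mem_edgeSet, cube_adj, Sym2.mem_iff, Gx_adj]
    constructor
    · rintro ⟨h, ⟨x, hx, hxA⟩, ⟨y, hy, hyA⟩⟩
      refine ⟨h, ?_⟩
      rcases hx with rfl | rfl <;> rcases hy with rfl | rfl
      · exact absurd hxA hyA
      · exact Or.inl ⟨hxA, hyA⟩
      · exact Or.inr ⟨hxA, hyA⟩
      · exact absurd hxA hyA
    · rintro ⟨h, ⟨hu, hv⟩ | ⟨hv, hu⟩⟩
      · exact ⟨h, ⟨u, Or.inl rfl, hu⟩, ⟨v, Or.inr rfl, hv⟩⟩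
      · exact ⟨h, ⟨v, Or.inr rfl, hv⟩, ⟨u, Or.inl rfl, hu⟩⟩

def D {n : ℕ} (A B : Finset (Vtx n)) : ℕ :=
  ((A ×ˢ B).filter fun p => hammingDist p.1 p.2 = 1).card

lemma D_eq_sum {n : ℕ} (A B : Finset (Vtx n)) :
    D A B = ∑ u ∈ A, (B.filter fun v => hammingDist u v = 1).card := by
  classical
  simp only [D, Finset.card_filter, Finset.sum_product]

lemma D_comm {n : ℕ} (A B : Finset (Vtx n)) : D A B = D B A := by
  classical
  simp only [D_eq_sum, Finset.card_filter]
  rw [Finset.sum_comm]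
  congr 1; ext u; congr 1; ext v
  rw [hammingDist_comm]

lemma Gin_degree {n : ℕ} (A : Finset (Vtx n)) (v : Vtx n) :
    (Gin n A).degree v =
      if v ∈ A then (A.filter fun w => hammingDist v w = 1).card else 0 := by
  classical
  rw [← SimpleGraph.card_neighborFinset_eq_degree]
  by_cases hv : v ∈ A
  · rw [if_pos hv]
    congr 1
    ext w
    simp [SimpleGraph.mem_neighborFinset, Gin_adj, hv, and_comm]
  · rw [if_neg hv]
    rw [Finset.card_eq_zero]
    ext w
    simp [SimpleGraph.mem_neighborFinset, Gin_adj, hv]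

lemma two_mul_edgesWithin (n : ℕ) (A : Finset (Vtx n)) :
    2 * edgesWithin (cubeGraph n) A = D A A := by
  classical
  rw [edgesWithin_eq, ← SimpleGraph.sum_degrees_eq_twice_card_edges, D_eq_sum]
  rw [Finset.sum_congr rfl (fun v _ => Gin_degree A v)]
  rw [Finset.sum_ite_mem, Finset.univ_inter]

lemma Gx_degree {n : ℕ} (A : Finset (Vtx n)) (v : Vtx n) :
    (Gx n A).degree v =
      if v ∈ A then (Aᶜ.filter fun w => hammingDist v w = 1).card
      else (A.filter fun w => hammingDist v w = 1).card := by
  classical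
  rw [← SimpleGraph.card_neighborFinset_eq_degree]
  by_cases hv : v ∈ A
  · rw [if_pos hv]
    congr 1
    ext w
    simp only [SimpleGraph.mem_neighborFinset, Gx_adj, Finset.mem_filter, Finset.mem_compl]
    constructor
    · rintro ⟨h, ⟨-, hw⟩ | ⟨-, hw⟩⟩
      · exact ⟨hw, h⟩
      · exact absurd hv hw
    · rintro ⟨hw, h⟩
      exact ⟨h, Or.inl ⟨hv, hw⟩⟩
  · rw [if_neg hv]
    congr 1
    ext w
    simp only [SimpleGraph.mem_neighborFinset, Gx_adj, Finset.mem_filter]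
    constructor
    · rintro ⟨h, ⟨hw, -⟩ | ⟨hw, -⟩⟩
      · exact absurd hw hv
      · exact ⟨hw, h⟩
    · rintro ⟨hw, h⟩
      exact ⟨h, Or.inr ⟨hw, hv⟩⟩

lemma two_mul_edgesAcross (n : ℕ) (A : Finset (Vtx n)) :
    edgesAcross (cubeGraph n) A = D A Aᶜ := by
  classical
  have h : 2 * edgesAcross (cubeGraph n) A = 2 * D A Aᶜ := by
    rw [edgesAcross_eq, ← SimpleGraph.sum_degrees_eq_twice_card_edges]
    rw [Finset.sum_congr rfl (fun v _ => Gx_degree A v)]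
    rw [← Finset.sum_add_sum_compl A]
    rw [Finset.sum_congr rfl (fun v hv => if_pos hv),
      Finset.sum_congr rfl (fun v hv => if_neg (Finset.mem_compl.mp hv))]
    rw [← D_eq_sum, ← D_eq_sum, D_comm Aᶜ A, two_mul]
  omega

lemma D_split (n : ℕ) (A : Finset (Vtx n)) :
    D A A + D A Aᶜ = n * A.card := by
  classical
  simp only [D_eq_sum]
  rw [← Finset.sum_add_distrib]
  have h : ∀ u ∈ A, (A.filter fun v => hammingDist u v = 1).card
      + (Aᶜ.filter fun v => hammingDist u v = 1).card = n := by
    intro u _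
    rw [← Finset.card_union_of_disjoint
      (Finset.disjoint_filter_filter disjoint_compl_right),
      ← Finset.filter_union, Finset.union_compl]
    exact neighbors_card u
  rw [Finset.sum_congr rfl h, Finset.sum_const, smul_eq_mul, mul_comm]


lemma log_one_add_ge (t : ℝ) (h0 : 0 ≤ t) (h1 : t ≤ 1) :
    Real.log 2 * t ≤ Real.log (1 + t) := by
  have hexp : Real.exp (Real.log 2 * t) ≤ 1 + t := by
    have hc := convexOn_exp.2 (Set.mem_univ (0 : ℝ)) (Set.mem_univ (Real.log 2))
      (by linarith : (0:ℝ) ≤ 1 - t) h0 (by ring)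
    simp only [smul_eq_mul, mul_zero, zero_add, Real.exp_zero,
      Real.exp_log two_pos] at hc
    calc Real.exp (Real.log 2 * t) = Real.exp ((1-t) * 0 + t * Real.log 2) := by
          ring_nf
      _ ≤ (1-t) * 1 + t * 2 := by
          simpa [Real.exp_zero, Real.exp_log two_pos] using
            convexOn_exp.2 (Set.mem_univ (0 : ℝ)) (Set.mem_univ (Real.log 2))
              (by linarith : (0:ℝ) ≤ 1 - t) h0 (by ring)
      _ = 1 + t := by ring
  calc Real.log 2 * t = Real.log (Real.exp (Real.log 2 * t)) := by
        rw [Real.log_exp]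
    _ ≤ Real.log (1 + t) := Real.log_le_log (Real.exp_pos _) hexp

lemma key_real (a b : ℝ) (ha : 0 ≤ a) (hab : a ≤ b) :
    a * Real.logb 2 a + b * Real.logb 2 b + 2 * a ≤ (a + b) * Real.logb 2 (a + b) := by
  rcases eq_or_lt_of_le ha with rfl | hapos
  · simp
  have hb : 0 < b := lt_of_lt_of_le hapos hab
  have hab2 : 0 < a + b := by linarith
  have hlog2 : 0 < Real.log 2 := Real.log_pos (by norm_num)
  -- (a+b) logb (a+b) - a logb a - b logb b = a * logb ((a+b)/a) + b * logb ((a+b)/b)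
  have e1 : (a + b) * Real.logb 2 (a + b) - a * Real.logb 2 a - b * Real.logb 2 b
      = a * (Real.logb 2 (a+b) - Real.logb 2 a) + b * (Real.logb 2 (a+b) - Real.logb 2 b) := by
    ring
  have h1 : a ≤ a * (Real.logb 2 (a+b) - Real.logb 2 a) := by
    have : (1:ℝ) ≤ Real.logb 2 (a+b) - Real.logb 2 a := by
      rw [← Real.logb_div (by positivity) (by positivity)]
      have h2a : (2:ℝ) ≤ (a+b)/a := by
        rw [le_div_iff₀ hapos]; linarith
      calc (1:ℝ) = Real.logb 2 2 := (Real.logb_self_eq_one (by norm_num)).symm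
        _ ≤ Real.logb 2 ((a+b)/a) :=
            Real.logb_le_logb_of_le (by norm_num) (by norm_num) h2a
    nlinarith
  have h2 : a ≤ b * (Real.logb 2 (a+b) - Real.logb 2 b) := by
    rw [← Real.logb_div (ne_of_gt hab2) (ne_of_gt hb)]
    have hd : (a+b)/b = 1 + a/b := by field_simp; ring
    rw [hd, Real.logb]
    have hlb := log_one_add_ge (a/b) (by positivity) (by rwa [div_le_one hb])
    have key : a / b ≤ Real.log (1 + a/b) / Real.log 2 := by
      rw [le_div_iff₀ hlog2]
      nlinarith
    calc a = b * (a / b) := by field_simp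
      _ ≤ b * (Real.log (1 + a/b) / Real.log 2) :=
          mul_le_mul_of_nonneg_left key (le_of_lt hb)
  linarith

lemma hamming_cons {n : ℕ} (u v : Vtx (n+1)) :
    hammingDist u v
      = (if u 0 = v 0 then 0 else 1) + hammingDist (Fin.tail u) (Fin.tail v) := by
  classical
  show (Finset.univ.filter fun i => u i ≠ v i).card = _
  rw [Fin.card_filter_univ_succ' (fun i => u i ≠ v i)]
  congr 1
  · by_cases h : u 0 = v 0 <;> simp [h]


section Split
variable {n : ℕ} (A : Finset (Vtx (n+1)))

variable {n : ℕ} (A : Finset (Vtx (n+1)))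

def half (b : Bool) : Finset (Vtx n) :=
  ((A.filter fun v => v 0 = b).image Fin.tail)

lemma mem_half {b : Bool} {w : Vtx n} :
    w ∈ half A b ↔ Fin.cons b w ∈ A := by
  classical
  simp only [half, Finset.mem_image, Finset.mem_filter]
  constructor
  · rintro ⟨v, ⟨hv, hb⟩, rfl⟩
    rwa [← hb, Fin.cons_self_tail]
  · intro h
    exact ⟨Fin.cons b w, ⟨h, by simp⟩, by simp [Fin.tail_cons]⟩

lemma card_half (b : Bool) :
    (half A b).card = (A.filter fun v => v 0 = b).card := by
  classical
  apply Finset.card_image_of_injOn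
  intro x hx y hy hxy
  simp only [coe_filter, Set.mem_setOf_eq] at hx hy
  rw [← Fin.cons_self_tail x, ← Fin.cons_self_tail y, hx.2, hy.2, hxy]

lemma card_halves : (half A false).card + (half A true).card = A.card := by
  classical
  rw [card_half, card_half]
  have he : (A.filter fun v => v 0 = true) = (A.filter fun v => ¬ v 0 = false) := by
    apply Finset.filter_congr
    intro v _
    cases h : v 0 <;> simp [h]
  rw [he]
  exact Finset.card_filter_add_card_filter_not (fun v : Vtx (n+1) => v 0 = false)

/-- pairs inside one half -/
lemma D_same (b : Bool) :
    ((A ×ˢ A).filter fun p =>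
        hammingDist p.1 p.2 = 1 ∧ (p.1 0 = b ∧ p.2 0 = b)).card
      = D (half A b) (half A b) := by
  classical
  apply Finset.card_nbij' (fun p => (Fin.tail p.1, Fin.tail p.2))
    (fun p => (Fin.cons b p.1, Fin.cons b p.2))
  · rintro ⟨u, v⟩ hp
    simp only [Finset.mem_coe, Finset.mem_filter, Finset.mem_product] at hp
    obtain ⟨⟨hu, hv⟩, hd, hb1, hb2⟩ := hp
    simp only [Finset.mem_coe, D, Finset.mem_filter, Finset.mem_product, mem_half]
    rw [hamming_cons, if_pos (by rw [hb1, hb2])] at hd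
    refine ⟨⟨?_, ?_⟩, by simpa using hd⟩
    · rwa [← hb1, Fin.cons_self_tail]
    · rwa [← hb2, Fin.cons_self_tail]
  · rintro ⟨u, v⟩ hp
    simp only [Finset.mem_coe, D, Finset.mem_filter, Finset.mem_product, mem_half] at hp
    obtain ⟨⟨hu, hv⟩, hd⟩ := hp
    simp only [Finset.mem_coe, Finset.mem_filter, Finset.mem_product]
    refine ⟨⟨hu, hv⟩, ?_, by simp, by simp⟩
    rw [hamming_cons]
    simp [Fin.tail_cons, hd]
  · rintro ⟨u, v⟩ hp
    simp only [Finset.mem_coe, Finset.mem_filter, Finset.mem_product] at hp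
    obtain ⟨-, -, hb1, hb2⟩ := hp
    simp only [Prod.mk.injEq]
    constructor
    · rw [← hb1]; exact Fin.cons_self_tail u
    · rw [← hb2]; exact Fin.cons_self_tail v
  · rintro ⟨u, v⟩ _
    simp [Fin.tail_cons]

/-- pairs across the halves biject with the intersection -/
lemma D_cross (b : Bool) :
    ((A ×ˢ A).filter fun p =>
        hammingDist p.1 p.2 = 1 ∧ (p.1 0 = b ∧ p.2 0 = !b)).card
      = ((half A false) ∩ (half A true)).card := by
  classical
  apply Finset.card_nbij' (fun p => Fin.tail p.1)
    (fun w => (Fin.cons b w, Fin.cons (!b) w))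
  · rintro ⟨u, v⟩ hp
    simp only [Finset.mem_coe, Finset.mem_filter, Finset.mem_product] at hp
    obtain ⟨⟨hu, hv⟩, hd, hb1, hb2⟩ := hp
    have hne : ¬ u 0 = v 0 := by rw [hb1, hb2]; cases b <;> simp
    rw [hamming_cons, if_neg hne] at hd
    have htail : Fin.tail u = Fin.tail v := by
      have h0 : hammingDist (Fin.tail u) (Fin.tail v) = 0 := by omega
      exact hammingDist_eq_zero.mp h0
    have h1 : Fin.cons (u 0) (Fin.tail u) ∈ A := by
      rw [Fin.cons_self_tail]; exact hu
    have h2 : Fin.cons (v 0) (Fin.tail u) ∈ A := by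
      rw [htail, Fin.cons_self_tail]; exact hv
    rw [hb1] at h1; rw [hb2] at h2
    simp only [Finset.mem_coe, Finset.mem_inter, mem_half]
    cases b
    · exact ⟨h1, by simpa using h2⟩
    · exact ⟨by simpa using h2, h1⟩
  · rintro w hw
    simp only [Finset.mem_coe, Finset.mem_inter, mem_half] at hw
    simp only [Finset.mem_coe, Finset.mem_filter, Finset.mem_product]
    have hb' : Fin.cons b w ∈ A := by cases b; exacts [hw.1, hw.2]
    have hc' : Fin.cons (!b) w ∈ A := by cases b; exacts [hw.2, hw.1]
    refine ⟨⟨hb', hc'⟩, ?_, by simp, by simp⟩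
    rw [hamming_cons]
    simp only [Fin.cons_zero, Fin.tail_cons, hammingDist_self, add_zero]
    rw [if_neg (by cases b <;> simp)]
  · rintro ⟨u, v⟩ hp
    simp only [Finset.mem_coe, Finset.mem_filter, Finset.mem_product] at hp
    obtain ⟨⟨hu, hv⟩, hd, hb1, hb2⟩ := hp
    have hne : ¬ u 0 = v 0 := by rw [hb1, hb2]; cases b <;> simp
    rw [hamming_cons, if_neg hne] at hd
    have htail : Fin.tail u = Fin.tail v := by
      have h0 : hammingDist (Fin.tail u) (Fin.tail v) = 0 := by omega
      exact hammingDist_eq_zero.mp h0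
    simp only [Prod.mk.injEq]
    constructor
    · rw [← hb1]; exact Fin.cons_self_tail u
    · rw [htail, ← hb2]; exact Fin.cons_self_tail v
  · rintro w _
    simp [Fin.tail_cons]

lemma quad_split (T : Finset (Vtx (n+1) × Vtx (n+1))) :
    (T.filter fun p => hammingDist p.1 p.2 = 1).card
      = (T.filter fun p => hammingDist p.1 p.2 = 1 ∧ (p.1 0 = false ∧ p.2 0 = false)).card
      + (T.filter fun p => hammingDist p.1 p.2 = 1 ∧ (p.1 0 = false ∧ p.2 0 = true)).card
      + (T.filter fun p => hammingDist p.1 p.2 = 1 ∧ (p.1 0 = true ∧ p.2 0 = false)).card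
      + (T.filter fun p => hammingDist p.1 p.2 = 1 ∧ (p.1 0 = true ∧ p.2 0 = true)).card := by
  classical
  have conv1 :
      (T.filter fun p => hammingDist p.1 p.2 = 1 ∧ ¬ p.1 0 = false)
        = T.filter fun p => hammingDist p.1 p.2 = 1 ∧ p.1 0 = true := by
    apply Finset.filter_congr; intro p _; cases h : p.1 0 <;> simp [h]
  have h1 := Finset.card_filter_add_card_filter_not
    (s := T.filter fun p => hammingDist p.1 p.2 = 1) (p := fun p => p.1 0 = false)
  have h2 := Finset.card_filter_add_card_filter_not
    (s := T.filter fun p => hammingDist p.1 p.2 = 1 ∧ p.1 0 = false)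
    (p := fun p => p.2 0 = false)
  have h3 := Finset.card_filter_add_card_filter_not
    (s := T.filter fun p => hammingDist p.1 p.2 = 1 ∧ p.1 0 = true)
    (p := fun p => p.2 0 = false)
  have ha : ∀ b c : Bool, (T.filter fun p => (hammingDist p.1 p.2 = 1 ∧ p.1 0 = b) ∧ p.2 0 = c)
      = T.filter fun p => hammingDist p.1 p.2 = 1 ∧ (p.1 0 = b ∧ p.2 0 = c) := by
    intro b c; apply Finset.filter_congr; intro p _; tauto
  have hb : ∀ b : Bool,
      (T.filter fun p => (hammingDist p.1 p.2 = 1 ∧ p.1 0 = b) ∧ ¬ p.2 0 = false)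
      = T.filter fun p => hammingDist p.1 p.2 = 1 ∧ (p.1 0 = b ∧ p.2 0 = true) := by
    intro b; apply Finset.filter_congr; intro p _
    cases h : p.2 0 <;> simp [h] <;> tauto
  simp only [Finset.filter_filter, conv1, ha, hb] at h1 h2 h3
  omega

lemma D_split_coord :
    D A A = D (half A false) (half A false) + D (half A true) (half A true)
      + 2 * ((half A false) ∩ (half A true)).card := by
  classical
  have key := quad_split (A ×ˢ A)
  rw [D, key, D_same A false, D_same A true]
  have hft := D_cross A false
  have htf := D_cross A true
  simp only [Bool.not_false, Bool.not_true] at hft htf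
  rw [hft, htf]
  ring
end Split

lemma D_zero (A : Finset (Vtx 0)) : D A A = 0 := by
  classical
  rw [D, Finset.card_eq_zero]
  apply Finset.filter_false_of_mem
  intro p _
  have h0 : hammingDist p.1 p.2 = 0 := by
    refine Nat.le_zero.mp (le_trans (Finset.card_filter_le _ _) ?_)
    simp
  omega

lemma key_ind (n : ℕ) (A : Finset (Vtx n)) :
    (D A A : ℝ) ≤ (A.card : ℝ) * Real.logb 2 (A.card) := by
  induction n with
  | zero =>
      rw [D_zero]
      have hle : A.card ≤ 1 := le_trans (Finset.card_le_univ A) (by simp)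
      interval_cases h : A.card <;> simp
  | succ n ih =>
      have hsplit := D_split_coord A
      have hcard := card_halves A
      have hIle : ((half A false) ∩ (half A true)).card ≤
          min (half A false).card (half A true).card :=
        le_min (Finset.card_le_card Finset.inter_subset_left)
          (Finset.card_le_card Finset.inter_subset_right)
      have h0 := ih (half A false)
      have h1 := ih (half A true)
      set x := ((half A false).card : ℝ) with hx
      set y := ((half A true).card : ℝ) with hy
      have hxy : x + y = (A.card : ℝ) := by
        rw [hx, hy, ← Nat.cast_add, hcard]
      have hD : (D A A : ℝ) = (D (half A false) (half A false) : ℝ)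
          + (D (half A true) (half A true) : ℝ)
          + 2 * (((half A false) ∩ (half A true)).card : ℝ) := by
        rw [hsplit]; push_cast; ring
      rcases le_total (half A false).card (half A true).card with hc | hc
      · have hmin : (((half A false) ∩ (half A true)).card : ℝ) ≤ x := by
          rw [hx]
          exact_mod_cast le_trans hIle (min_le_left _ _)
        have := key_real x y (by rw [hx]; positivity) (by rw [hx, hy]; exact_mod_cast hc)
        rw [hxy] at this
        linarith
      · have hmin : (((half A false) ∩ (half A true)).card : ℝ) ≤ y := by
          rw [hy]
          exact_mod_cast le_trans hIle (min_le_right _ _)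
        have := key_real y x (by rw [hy]; positivity) (by rw [hx, hy]; exact_mod_cast hc)
        have hyx : y + x = (A.card : ℝ) := by rw [← hxy]; ring
        rw [hyx] at this
        linarith

/-- Isoperimetric inequality for the hypercube: for every nonempty `A ⊆ V(Q^n)`,
the number of edges of `Q^n` inside `A` is at most `|A|·log₂|A|/2`; equivalently,
the number of edges of `Q^n` joining `A` to its complement is at least
`n·|A| − |A|·log₂|A|`. -/
theorem stmt_6 (n : ℕ) (A : Finset (Vtx n)) (hA : A.Nonempty) :
    (edgesWithin (cubeGraph n) A : ℝ) ≤ (A.card : ℝ) * Real.logb 2 (A.card) / 2 ∧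
    (n : ℝ) * (A.card : ℝ) - (A.card : ℝ) * Real.logb 2 (A.card)
      ≤ (edgesAcross (cubeGraph n) A : ℝ) := by
  have hW := two_mul_edgesWithin n A
  have hX := two_mul_edgesAcross n A
  have hS := D_split n A
  have hkey := key_ind n A
  have hWr : 2 * (edgesWithin (cubeGraph n) A : ℝ) = (D A A : ℝ) := by
    exact_mod_cast congrArg (Nat.cast (R := ℝ)) hW
  have hXr : (edgesAcross (cubeGraph n) A : ℝ) = (D A Aᶜ : ℝ) := by
    exact_mod_cast congrArg (Nat.cast (R := ℝ)) hX
  have hSr : (D A A : ℝ) + (D A Aᶜ : ℝ) = (n : ℝ) * (A.card : ℝ) := by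
    exact_mod_cast congrArg (Nat.cast (R := ℝ)) hS
  constructor
  · linarith
  · linarith
end
end

section
/- Let each vertex v of Q^n independently choose a uniformly random neighbour f(v). Then the probability that there exists a vertex v such that the n² + 1 vertices v, f(v), f²(v), …, f^{n²}(v) are pairwise distinct tends to 0 as n → ∞; equivalently, w.h.p. the functional digraph with arcs (v, f(v)) contains no directed path of length greater than n². -/
open scoped Classical
open Filter

noncomputable section

/-- Sample space: every vertex independently chooses a uniformly random neighbour. -/
abbrev NbrChoice (n : ℕ) := ∀ v : Vtx n, {u : Vtx n // (cubeGraph n).Adj v u}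

/-- Uniform (counting) probability of an event on a finite sample space. -/
def prob {Ω : Type*} [Finite Ω] (p : Ω → Prop) : ℝ :=
  (Nat.card {ω : Ω // p ω} : ℝ) / (Nat.card Ω : ℝ)

variable {n : ℕ}

def flp (v : Vtx n) (j : Fin n) : Vtx n := Function.update v j (!(v j))

lemma flip_apply_self (v : Vtx n) (j : Fin n) : flp v j j = !(v j) := by
  simp [flp]

lemma flip_apply_ne (v : Vtx n) {j i : Fin n} (h : i ≠ j) : flp v j i = v i := by
  simp [flp, Function.update_of_ne h]

lemma flip_flip' (v : Vtx n) (j : Fin n) : flp (flp v j) j = v := by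
  funext i
  by_cases h : i = j
  · subst h; simp [flip_apply_self]
  · rw [flip_apply_ne _ h, flip_apply_ne _ h]

lemma hammingDist_flip (v : Vtx n) (j : Fin n) : hammingDist v (flp v j) = 1 := by
  unfold hammingDist
  rw [Finset.card_eq_one]
  refine ⟨j, ?_⟩
  ext i
  simp only [Finset.mem_filter, Finset.mem_univ, true_and, Finset.mem_singleton]
  constructor
  · intro h
    by_contra hij
    exact h (flip_apply_ne v hij).symm
  · rintro rfl
    simp [flip_apply_self]

lemma adj_iff {u w : Vtx n} : (cubeGraph n).Adj u w ↔ hammingDist u w = 1 := by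
  constructor
  · rintro ⟨hne, h | h⟩
    · exact h
    · rw [hammingDist_comm]; exact h
  · intro h
    refine ⟨?_, Or.inl h⟩
    intro he; subst he; simp [hammingDist_self] at h

lemma adj_flp (v : Vtx n) (j : Fin n) : (cubeGraph n).Adj v (flp v j) :=
  adj_iff.2 (hammingDist_flip v j)

lemma flp_ne (v : Vtx n) (j : Fin n) : flp v j ≠ v := by
  intro h
  have := congrFun h j
  rw [flip_apply_self] at this
  simp at this

lemma flp_injective (v : Vtx n) : Function.Injective (flp v) := by
  intro j j' h
  by_contra hne
  have h1 := congrFun h j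
  rw [flip_apply_self] at h1
  rw [flip_apply_ne v hne] at h1
  simp at h1

lemma exists_flp {v u : Vtx n} (h : (cubeGraph n).Adj v u) : ∃ j, u = flp v j := by
  have hd : hammingDist v u = 1 := adj_iff.1 h
  unfold hammingDist at hd
  obtain ⟨j, hj⟩ := Finset.card_eq_one.1 hd
  refine ⟨j, funext fun i => ?_⟩
  by_cases hij : i = j
  · subst hij
    have : i ∈ ({i} : Finset (Fin n)) := Finset.mem_singleton_self i
    rw [← hj] at this
    simp only [Finset.mem_filter, Finset.mem_univ, true_and] at this
    rw [flip_apply_self]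
    revert this
    cases v i <;> cases u i <;> simp
  · have : i ∉ Finset.filter (fun i => v i ≠ u i) Finset.univ := by
      rw [hj]; simpa using hij
    simp only [Finset.mem_filter, Finset.mem_univ, true_and, not_not] at this
    rw [flip_apply_ne v hij, this]

def nbrE (v : Vtx n) : Fin n ≃ {u // (cubeGraph n).Adj v u} :=
  Equiv.ofBijective (fun j => ⟨flp v j, adj_flp v j⟩)
    ⟨fun j j' h => flp_injective v (congrArg Subtype.val h),
     fun u => by obtain ⟨j, hj⟩ := exists_flp u.2; exact ⟨j, Subtype.ext hj.symm⟩⟩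

lemma nbrE_symm_flp (v : Vtx n) (u : {u // (cubeGraph n).Adj v u}) :
    flp v ((nbrE v).symm u) = u := by
  have := (nbrE v).apply_symm_apply u
  exact congrArg Subtype.val this

lemma card_nbr (v : Vtx n) : Nat.card {u // (cubeGraph n).Adj v u} = n := by
  rw [← Nat.card_congr (nbrE v)]
  simp

lemma card_omega : Nat.card (NbrChoice n) = n ^ (2 ^ n) := by
  rw [Nat.card_pi]
  have : ∀ v : Vtx n, Nat.card {u // (cubeGraph n).Adj v u} = n := card_nbr
  rw [Finset.prod_congr rfl fun v _ => this v, Finset.prod_const]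
  simp

def F (ω : NbrChoice n) : Vtx n → Vtx n := fun w => (ω w : Vtx n)

def pth (ω : NbrChoice n) (v : Vtx n) (i : ℕ) : Vtx n := (F ω)^[i] v

def dirs (ω : NbrChoice n) (v : Vtx n) (i : ℕ) : Fin n :=
  (nbrE (pth ω v i)).symm (ω (pth ω v i))

lemma pth_succ (ω : NbrChoice n) (v : Vtx n) (i : ℕ) :
    pth ω v (i + 1) = flp (pth ω v i) (dirs ω v i) := by
  rw [pth, Function.iterate_succ_apply', dirs]
  exact (nbrE_symm_flp _ _).symm

def wlk (v : Vtx n) (d : ℕ → Fin n) : ℕ → Vtx n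
  | 0 => v
  | i + 1 => flp (wlk v d i) (d i)

lemma wlk_eq_pth (ω : NbrChoice n) (v : Vtx n) : ∀ i, wlk v (dirs ω v) i = pth ω v i
  | 0 => rfl
  | i + 1 => by rw [wlk, wlk_eq_pth ω v i, pth_succ]

lemma wlk_congr (v : Vtx n) {d d' : ℕ → Fin n} : ∀ i, (∀ j < i, d j = d' j) →
    wlk v d i = wlk v d' i
  | 0, _ => rfl
  | i + 1, h => by
      rw [wlk, wlk, wlk_congr v i fun j hj => h j (Nat.lt_succ_of_lt hj),
        h i (Nat.lt_succ_self i)]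

lemma sq_le_two_pow {n : ℕ} (hn : 5 ≤ n) : n ^ 2 ≤ 2 ^ n := by
  induction n with
  | zero => simp
  | succ m ih =>
    rcases Nat.lt_or_ge m 5 with hm | hm
    · interval_cases m <;> simp_all
    · have h1 := ih (by omega)
      have h2 : 2 * m + 1 ≤ m ^ 2 := by nlinarith
      calc (m + 1) ^ 2 = m ^ 2 + (2 * m + 1) := by ring
        _ ≤ m ^ 2 + m ^ 2 := by omega
        _ ≤ 2 ^ m + 2 ^ m := by omega
        _ = 2 ^ (m + 1) := by ring

def dvec (ω : NbrChoice n) (v : Vtx n) : Fin (n ^ 2) → Fin n := fun i => dirs ω v i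

def Pinj (ω : NbrChoice n) (v : Vtx n) : Prop :=
  Function.Injective (fun i : Fin (n ^ 2 + 1) => pth ω v i)

def wlkF (v : Vtx n) (d : Fin (n ^ 2) → Fin n) : ℕ → Vtx n
  | 0 => v
  | i + 1 => if h : i < n ^ 2 then flp (wlkF v d i) (d ⟨i, h⟩) else wlkF v d i

lemma pth_eq_wlkF {ω : NbrChoice n} {v : Vtx n} {d : Fin (n ^ 2) → Fin n}
    (h : dvec ω v = d) : ∀ i, i ≤ n ^ 2 → pth ω v i = wlkF v d i
  | 0, _ => rfl
  | i + 1, hi => by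
      have hilt : i < n ^ 2 := hi
      rw [wlkF, dif_pos hilt, ← pth_eq_wlkF h i (le_of_lt hilt), pth_succ]
      exact congrArg (flp (pth ω v i)) (congrFun h ⟨i, hilt⟩)

lemma fiber_card (hn : 5 ≤ n) (hL : n ^ 2 ≤ 2 ^ n) (v : Vtx n) (d : Fin (n ^ 2) → Fin n) :
    (Finset.univ.filter (fun ω : NbrChoice n => Pinj ω v ∧ dvec ω v = d)).card
      ≤ n ^ (2 ^ n - n ^ 2) := by
  classical
  set s := Finset.univ.filter (fun ω : NbrChoice n => Pinj ω v ∧ dvec ω v = d) with hs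
  rcases Finset.eq_empty_or_nonempty s with he | ⟨ω₀, hω₀⟩
  · rw [he]; simp
  · rw [hs, Finset.mem_filter] at hω₀
    obtain ⟨-, hinj₀, hd₀⟩ := hω₀
    set W : ℕ → Vtx n := wlkF v d with hW
    set PS : Finset (Vtx n) := (Finset.range (n ^ 2)).image W with hPS
    have hWinj : ∀ i ≤ n ^ 2, ∀ j ≤ n ^ 2, W i = W j → i = j := by
      intro i hi j hj hij
      have h1 : pth ω₀ v i = pth ω₀ v j := by
        rw [pth_eq_wlkF hd₀ i hi, pth_eq_wlkF hd₀ j hj]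
        exact hij
      have := hinj₀ (a₁ := ⟨i, Nat.lt_succ_of_le hi⟩) (a₂ := ⟨j, Nat.lt_succ_of_le hj⟩) h1
      exact congrArg Fin.val this
    have hPScard : PS.card = n ^ 2 := by
      rw [hPS, Finset.card_image_of_injOn, Finset.card_range]
      intro i hi j hj hij
      exact hWinj i (le_of_lt (Finset.mem_range.1 hi)) j (le_of_lt (Finset.mem_range.1 hj)) hij
    -- target type
    have hcardT : Fintype.card (∀ u : {u : Vtx n // u ∉ PS},
        {x : Vtx n // (cubeGraph n).Adj u.1 x}) = n ^ (2 ^ n - n ^ 2) := by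
      rw [Fintype.card_pi]
      have h1 : ∀ u : {u : Vtx n // u ∉ PS},
          Fintype.card {x : Vtx n // (cubeGraph n).Adj u.1 x} = n := by
        intro u
        have := card_nbr (n := n) u.1
        rwa [Nat.card_eq_fintype_card] at this
      rw [Finset.prod_congr rfl fun u _ => h1 u, Finset.prod_const]
      congr 1
      rw [Finset.card_univ, Fintype.card_subtype]
      have : Finset.univ.filter (fun u : Vtx n => u ∉ PS) = Finset.univ \ PS := by
        ext u; simp
      rw [this, Finset.card_sdiff_of_subset (Finset.subset_univ PS), hPScard, Finset.card_univ]
      congr 1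
      simp [Vtx]
    rw [← hcardT, ← Finset.card_univ]
    refine Finset.card_le_card_of_injOn (fun ω u => ω u.1) (fun _ _ => Finset.mem_univ _) ?_
    intro ω hω ω' hω' heq
    rw [hs, Finset.mem_coe, Finset.mem_filter] at hω hω'
    obtain ⟨-, hinj, hdv⟩ := hω
    obtain ⟨-, hinj', hdv'⟩ := hω'
    funext u
    by_cases hu : u ∈ PS
    · rw [hPS, Finset.mem_image] at hu
      obtain ⟨i, hi, hiu⟩ := hu
      rw [Finset.mem_range] at hi
      have hWp : pth ω v i = W i := pth_eq_wlkF hdv i (le_of_lt hi)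
      have hWp' : pth ω' v i = W i := pth_eq_wlkF hdv' i (le_of_lt hi)
      have e1 : (ω u : Vtx n) = pth ω v (i + 1) := by
        rw [pth, Function.iterate_succ_apply', ← pth, hWp, hiu]
        rfl
      have e1' : (ω' u : Vtx n) = pth ω' v (i + 1) := by
        rw [pth, Function.iterate_succ_apply', ← pth, hWp', hiu]
        rfl
      have e2 : pth ω v (i + 1) = pth ω' v (i + 1) := by
        rw [pth_eq_wlkF hdv (i+1) hi, pth_eq_wlkF hdv' (i+1) hi]
      have : (ω u : Vtx n) = (ω' u : Vtx n) := by rw [e1, e1', e2]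
      exact Subtype.ext this
    · exact congrFun heq ⟨u, hu⟩

def canEqv (a : Fin n) : {x : Fin n // x ≠ a} ≃ Fin (n - 1) :=
  (Fintype.equivFinOfCardEq (by
    rw [Fintype.card_subtype_compl, Fintype.card_subtype_eq, Fintype.card_fin]))

lemma canEqv_inj' {n : ℕ} {a a' x x' : Fin n} (ha : x ≠ a) (ha' : x' ≠ a') (haa : a = a')
    (h : canEqv a ⟨x, ha⟩ = canEqv a' ⟨x', ha'⟩) : x = x' := by
  subst haa
  exact congrArg Subtype.val ((canEqv a).injective h)

lemma nb_card (hn : 5 ≤ n) :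
    (Finset.univ.filter (fun d : Fin (n ^ 2) → Fin n =>
        ∀ i : ℕ, ∀ h : i + 1 < n ^ 2, d ⟨i + 1, h⟩ ≠ d ⟨i, by omega⟩)).card
      ≤ n * (n - 1) ^ (n ^ 2 - 1) := by
  classical
  have hL : 25 ≤ n ^ 2 := by nlinarith
  have hcard : n * (n - 1) ^ (n ^ 2 - 1)
      = Fintype.card (Fin n × (Fin (n ^ 2 - 1) → Fin (n - 1))) := by
    simp
  rw [hcard, ← Finset.card_univ]
  refine Finset.card_le_card_of_injOn
    (fun d => (d ⟨0, by omega⟩, fun i : Fin (n ^ 2 - 1) =>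
      if h : d ⟨i.1 + 1, by omega⟩ ≠ d ⟨i.1, by omega⟩
      then canEqv _ ⟨_, h⟩ else ⟨0, by omega⟩))
    (fun _ _ => Finset.mem_univ _) ?_
  intro d hd d' hd' heq
  rw [Finset.mem_coe, Finset.mem_filter] at hd hd'
  obtain ⟨-, hd⟩ := hd
  obtain ⟨-, hd'⟩ := hd'
  have key : ∀ k, ∀ hk : k < n ^ 2, d ⟨k, hk⟩ = d' ⟨k, hk⟩ := by
    intro k
    induction k with
    | zero => intro hk; exact congrArg Prod.fst heq
    | succ k ih =>
      intro hk
      have hk' : k < n ^ 2 := by omega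
      have hik : k < n ^ 2 - 1 := by omega
      have h2 := congrFun (congrArg Prod.snd heq) ⟨k, hik⟩
      simp only at h2
      rw [dif_pos (hd k hk), dif_pos (hd' k hk)] at h2
      exact canEqv_inj' _ _ (ih hk') h2
  funext i
  have := key i.1 i.2
  simpa using this

lemma perv_card (hn : 5 ≤ n) (v : Vtx n) :
    (Finset.univ.filter (fun ω : NbrChoice n => Pinj ω v)).card
      ≤ n * (n - 1) ^ (n ^ 2 - 1) * n ^ (2 ^ n - n ^ 2) := by
  classical
  have hL : n ^ 2 ≤ 2 ^ n := sq_le_two_pow hn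
  set s := Finset.univ.filter (fun ω : NbrChoice n => Pinj ω v) with hs
  rw [Finset.card_eq_sum_card_fiberwise
    (f := fun ω => dvec ω v) (t := s.image (fun ω => dvec ω v))
    (fun x hx => Finset.mem_image_of_mem _ hx)]
  have hfib : ∀ d ∈ s.image (fun ω => dvec ω v),
      (s.filter (fun ω => dvec ω v = d)).card ≤ n ^ (2 ^ n - n ^ 2) := by
    intro d _
    have : s.filter (fun ω => dvec ω v = d)
        = Finset.univ.filter (fun ω : NbrChoice n => Pinj ω v ∧ dvec ω v = d) := by
      ext ω
      simp only [hs, Finset.mem_filter, Finset.mem_univ, true_and, and_assoc]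
    rw [this]
    exact fiber_card hn hL v d
  calc ∑ d ∈ s.image (fun ω => dvec ω v), (s.filter (fun ω => dvec ω v = d)).card
      ≤ ∑ _d ∈ s.image (fun ω => dvec ω v), n ^ (2 ^ n - n ^ 2) :=
        Finset.sum_le_sum hfib
    _ = (s.image (fun ω => dvec ω v)).card * n ^ (2 ^ n - n ^ 2) := by
        rw [Finset.sum_const, smul_eq_mul]
    _ ≤ (n * (n - 1) ^ (n ^ 2 - 1)) * n ^ (2 ^ n - n ^ 2) := by
        refine Nat.mul_le_mul_right _ ?_
        refine le_trans (Finset.card_le_card ?_) (nb_card hn)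
        intro d hd
        rw [Finset.mem_image] at hd
        obtain ⟨ω, hω, rfl⟩ := hd
        rw [hs, Finset.mem_filter] at hω
        obtain ⟨-, hinj⟩ := hω
        rw [Finset.mem_filter]
        refine ⟨Finset.mem_univ _, ?_⟩
        intro i hi1 hcon
        have hstep : pth ω v (i + 2) = pth ω v i := by
          have hdd : dirs ω v (i + 1) = dirs ω v i := hcon
          rw [pth_succ, pth_succ, hdd, flip_flip']
        have := hinj (a₁ := ⟨i + 2, by omega⟩) (a₂ := ⟨i, by omega⟩) hstep
        have := congrArg Fin.val this
        simp at this
    _ = n * (n - 1) ^ (n ^ 2 - 1) * n ^ (2 ^ n - n ^ 2) := by ring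

lemma total_card (hn : 5 ≤ n) :
    Nat.card {ω : NbrChoice n // ∃ v : Vtx n, Pinj ω v}
      ≤ 2 ^ n * (n * (n - 1) ^ (n ^ 2 - 1) * n ^ (2 ^ n - n ^ 2)) := by
  classical
  rw [Nat.card_eq_fintype_card, Fintype.card_subtype]
  have hsub : Finset.univ.filter (fun ω : NbrChoice n => ∃ v : Vtx n, Pinj ω v)
      ⊆ Finset.univ.biUnion (fun v : Vtx n =>
          Finset.univ.filter (fun ω : NbrChoice n => Pinj ω v)) := by
    intro ω hω
    rw [Finset.mem_filter] at hω
    obtain ⟨-, v, hv⟩ := hω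
    exact Finset.mem_biUnion.2 ⟨v, Finset.mem_univ _, Finset.mem_filter.2 ⟨Finset.mem_univ _, hv⟩⟩
  calc (Finset.univ.filter (fun ω : NbrChoice n => ∃ v : Vtx n, Pinj ω v)).card
      ≤ (Finset.univ.biUnion (fun v : Vtx n =>
          Finset.univ.filter (fun ω : NbrChoice n => Pinj ω v))).card :=
        Finset.card_le_card hsub
    _ ≤ ∑ v : Vtx n, (Finset.univ.filter (fun ω : NbrChoice n => Pinj ω v)).card :=
        Finset.card_biUnion_le
    _ ≤ ∑ _v : Vtx n, n * (n - 1) ^ (n ^ 2 - 1) * n ^ (2 ^ n - n ^ 2) :=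
        Finset.sum_le_sum (fun v _ => perv_card hn v)
    _ = 2 ^ n * (n * (n - 1) ^ (n ^ 2 - 1) * n ^ (2 ^ n - n ^ 2)) := by
        rw [Finset.sum_const, smul_eq_mul, Finset.card_univ]
        congr 1
        simp [Vtx]

lemma prob_bound (hn : 5 ≤ n) :
    prob (fun ω : NbrChoice n => ∃ v : Vtx n, Pinj ω v)
      ≤ 2 * (2 * Real.exp (-1)) ^ (n - 1) := by
  have hL : n ^ 2 ≤ 2 ^ n := sq_le_two_pow hn
  have hn0 : (0:ℝ) < (n : ℝ) := by positivity
  set L1 := n ^ 2 - 1 with hL1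
  set M := 2 ^ n - n ^ 2 with hM
  have hexp : L1 + (M + 1) = 2 ^ n := by
    have h25 : 25 ≤ n ^ 2 := by nlinarith
    omega
  have hden : ((Nat.card (NbrChoice n) : ℕ) : ℝ) = ((n : ℝ) ^ L1) * ((n:ℝ) ^ (M + 1)) := by
    rw [card_omega]
    push_cast
    rw [← pow_add, hexp]
  have hnum : ((2 ^ n * (n * (n - 1) ^ (n ^ 2 - 1) * n ^ (2 ^ n - n ^ 2)) : ℕ) : ℝ)
      = 2 ^ n * ((n:ℝ) - 1) ^ L1 * (n:ℝ) ^ (M + 1) := by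
    push_cast [Nat.cast_sub (show 1 ≤ n by omega)]
    ring
  have step1 : prob (fun ω : NbrChoice n => ∃ v : Vtx n, Pinj ω v)
      ≤ 2 ^ n * (((n:ℝ) - 1) / n) ^ L1 := by
    rw [prob]
    have h1 : (Nat.card {ω : NbrChoice n // ∃ v : Vtx n, Pinj ω v} : ℝ)
        ≤ ((2 ^ n * (n * (n - 1) ^ (n ^ 2 - 1) * n ^ (2 ^ n - n ^ 2)) : ℕ) : ℝ) := by
      exact_mod_cast total_card hn
    have hdpos : (0:ℝ) < ((Nat.card (NbrChoice n) : ℕ) : ℝ) := by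
      rw [hden]; positivity
    refine le_trans (div_le_div_of_nonneg_right h1 (le_of_lt hdpos) |>.trans_eq ?_) le_rfl
    rw [hnum, hden, div_pow]
    field_simp
  refine le_trans step1 ?_
  have hfrac : ((n:ℝ) - 1) / n ≤ Real.exp (-(1 / n)) := by
    have := Real.add_one_le_exp (-(1 / (n:ℝ)))
    have heq : ((n:ℝ) - 1) / n = -(1/(n:ℝ)) + 1 := by field_simp; ring
    rw [heq]; exact this
  have hfrac0 : (0:ℝ) ≤ ((n:ℝ) - 1) / n := by
    apply div_nonneg _ (le_of_lt hn0)
    have : (5:ℝ) ≤ (n:ℝ) := by exact_mod_cast hn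
    linarith
  have step2 : (((n:ℝ) - 1) / n) ^ L1 ≤ Real.exp (-(((n:ℝ)) - 1)) := by
    calc (((n:ℝ) - 1) / n) ^ L1 ≤ (Real.exp (-(1 / n))) ^ L1 :=
          pow_le_pow_left₀ hfrac0 hfrac L1
      _ = Real.exp (L1 * (-(1 / n))) := by rw [← Real.exp_nat_mul]
      _ ≤ Real.exp (-(((n:ℝ)) - 1)) := by
          apply Real.exp_le_exp.2
          have hL1c : (L1 : ℝ) = (n:ℝ)^2 - 1 := by
            rw [hL1]
            push_cast [Nat.cast_sub (show 1 ≤ n ^ 2 by nlinarith)]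
            ring
          rw [hL1c]
          rw [mul_neg, neg_le_neg_iff, mul_one_div, le_div_iff₀ hn0]
          have : (5:ℝ) ≤ (n:ℝ) := by exact_mod_cast hn
          nlinarith
  calc (2:ℝ) ^ n * (((n:ℝ) - 1) / n) ^ L1
      ≤ (2:ℝ) ^ n * Real.exp (-(((n:ℝ)) - 1)) := by
        apply mul_le_mul_of_nonneg_left step2 (by positivity)
    _ = 2 * (2 * Real.exp (-1)) ^ (n - 1) := by
        obtain ⟨m, rfl⟩ : ∃ m, n = m + 1 := ⟨n - 1, by omega⟩
        rw [mul_pow, ← Real.exp_nat_mul]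
        simp only [Nat.add_sub_cancel]
        rw [pow_succ]
        push_cast
        rw [show -(((m:ℝ) + 1) - 1) = (m:ℝ) * (-1) by ring]
        ring

/-- Let each vertex `v` of `Q^n` independently choose a uniformly random neighbour
`f(v)`. The probability that some vertex `v` has the `n²+1` vertices
`v, f(v), …, f^{n²}(v)` pairwise distinct (i.e. the functional digraph has a
directed path of length greater than `n²`) tends to `0` as `n → ∞`. -/
theorem stmt_9 :
    Tendsto (fun n : ℕ =>
        prob (fun ω : NbrChoice n =>
          ∃ v : Vtx n,
            Function.Injective (fun i : Fin (n ^ 2 + 1) =>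
              (fun w : Vtx n => (ω w : Vtx n))^[(i : ℕ)] v)))
      atTop (nhds 0) := by
  show Tendsto (fun n : ℕ => prob (fun ω : NbrChoice n => ∃ v : Vtx n, Pinj ω v))
    atTop (nhds 0)
  have hr0 : (0:ℝ) ≤ 2 * Real.exp (-1) := by positivity
  have hr1 : 2 * Real.exp (-1) < 1 := by
    have h2 : (2:ℝ) < Real.exp 1 := lt_trans (by norm_num) Real.exp_one_gt_d9
    have hpos : (0:ℝ) < Real.exp 1 := Real.exp_pos 1
    rw [Real.exp_neg]
    have := (div_lt_one hpos).2 h2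
    rwa [div_eq_mul_inv] at this
  apply squeeze_zero'
    (Filter.Eventually.of_forall fun n => div_nonneg (Nat.cast_nonneg _) (Nat.cast_nonneg _))
  · filter_upwards [Filter.eventually_ge_atTop 5] with n hn
    exact prob_bound hn
  · have h1 : Tendsto (fun k : ℕ => (2 * Real.exp (-1)) ^ k)
        atTop (nhds 0) := tendsto_pow_atTop_nhds_zero_of_lt_one hr0 hr1
    have h2 : Tendsto (fun n : ℕ => n - 1) atTop atTop :=
      Filter.tendsto_sub_atTop_nat 1
    have h3 := (h1.comp h2).const_mul (2:ℝ)
    simpa using h3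
end
end
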